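/- For the Bernoulli(p) random walk and odd n ≥ 1, the first-hitting-time probability P(τ_1 = n) = P(S_1 ≤ 0, ..., S_{n−1} ≤ 0, S_n > 0) equals 2·a_{n−1}·p^{(n+1)/2}·q^{(n−1)/2}, where a_i = (1/(i+2))·C(i, i/2); it is 0 for even n. -/

import Mathlib

open List

namespace LawTau1

def bval (l : List Bool) : ℤ := (l.map (fun x => if x then (1:ℤ) else -1)).sum

@[simp] lemma bval_nil : bval [] = 0 := rfl
@[simp] lemma bval_cons (a : Bool) (l : List Bool) :
    bval (a :: l) = (if a then (1:ℤ) else -1) + bval l := rfl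
@[simp] lemma bval_append (l₁ l₂ : List Bool) : bval (l₁ ++ l₂) = bval l₁ + bval l₂ := by
  simp [bval]

lemma bval_eq_counts (l : List Bool) :
    bval l = (l.count true : ℤ) - (l.count false : ℤ) := by
  induction l with
  | nil => simp
  | cons a l ih => cases a <;> simp [ih, count_cons] <;> ring

def toB : DyckStep → Bool := fun s => match s with | DyckStep.U => false | DyckStep.D => true

def toS : Bool → DyckStep := fun b => if b then DyckStep.D else DyckStep.U

@[simp] lemma toS_toB (s : DyckStep) : toS (toB s) = s := by cases s <;> rfl
@[simp] lemma toB_toS (b : Bool) : toB (toS b) = b := by cases b <;> rfl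

lemma count_true_map_toB (l : List DyckStep) :
    (l.map toB).count true = l.count DyckStep.D := by
  induction l with
  | nil => rfl
  | cons a l ih => cases a <;> simp [count_cons, ih, toB]

lemma count_false_map_toB (l : List DyckStep) :
    (l.map toB).count false = l.count DyckStep.U := by
  induction l with
  | nil => rfl
  | cons a l ih => cases a <;> simp [count_cons, ih, toB]

lemma bval_map_toB (l : List DyckStep) :
    bval (l.map toB) = (l.count DyckStep.D : ℤ) - (l.count DyckStep.U : ℤ) := by
  rw [bval_eq_counts, count_true_map_toB, count_false_map_toB]

/-- valid sign sequences: first passage to 1 at time n -/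
def cond (n : ℕ) (b : Fin n → Bool) : Prop :=
  bval (List.ofFn b) = 1 ∧ ∀ k, 1 ≤ k → k < n → bval ((List.ofFn b).take k) ≠ 1

end LawTau1

namespace LawTau1

lemma ofFn_getD {n : ℕ} (l : List Bool) (h : l.length = n) :
    List.ofFn (fun i : Fin n => l.getD i true) = l := by
  apply List.ext_getElem (by simp [h])
  intro i h1 h2
  simp [List.getD_eq_getElem?_getD, List.getElem?_eq_getElem h2]

lemma bval_take_map_toB_nonpos (p : DyckWord) (k : ℕ) :
    bval ((p.toList.map toB).take k) ≤ 0 := by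
  rw [← List.map_take, bval_map_toB]
  have := p.count_D_le_count_U k
  omega

def Fmap (m : ℕ) (p : DyckWord) : Fin (2 * m + 1) → Bool :=
  fun i => (p.toList.map toB ++ [true]).getD i true

lemma ofFn_Fmap (m : ℕ) (p : DyckWord) (hp : p.semilength = m) :
    List.ofFn (Fmap m p) = p.toList.map toB ++ [true] := by
  apply ofFn_getD
  have := p.two_mul_semilength_eq_length
  simp [hp] at this ⊢
  omega

lemma cond_Fmap (m : ℕ) (p : DyckWord) (hp : p.semilength = m) :
    cond (2 * m + 1) (Fmap m p) := by
  have hlen : (p.toList.map toB).length = 2 * m := by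
    have := p.two_mul_semilength_eq_length
    simp [hp] at this ⊢; omega
  rw [cond, ofFn_Fmap m p hp]
  constructor
  · rw [bval_append, bval_map_toB, p.count_U_eq_count_D]
    simp [bval]
  · intro k hk1 hkn
    rw [List.take_append]
    have h0 : k - (p.toList.map toB).length = 0 := by omega
    rw [h0]
    have := bval_take_map_toB_nonpos p k
    simp only [List.take_zero, List.append_nil]
    omega

end LawTau1

namespace LawTau1

instance (n : ℕ) : DecidablePred (cond n) := fun b => by unfold cond; infer_instance

lemma counts_add (l : List Bool) : l.count true + l.count false = l.length :=
  List.count_true_add_count_false l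

@[simp] lemma bval_singleton (a : Bool) : bval [a] = if a then 1 else -1 := by simp [bval]

lemma bval_take_succ (l : List Bool) (k : ℕ) (h : k < l.length) :
    bval (l.take (k+1)) = bval (l.take k) + (if l[k] then 1 else -1) := by
  rw [List.take_succ, List.getElem?_eq_getElem h]
  simp only [Option.toList_some, bval_append, bval_singleton]

lemma nonpos_of_cond {n : ℕ} {b : Fin n → Bool} (hc : cond n b) :
    ∀ k, k < n → bval ((List.ofFn b).take k) ≤ 0 := by
  intro k
  induction k with
  | zero => simp
  | succ k ih =>
    intro hk
    have hkl : k < (List.ofFn b).length := by rw [List.length_ofFn]; omega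
    rw [bval_take_succ _ k hkl]
    have h1 := ih (by omega)
    have h2 := hc.2 (k+1) (by omega) hk
    rw [bval_take_succ _ k hkl] at h2
    cases hbk : (List.ofFn b)[k] <;> simp only [hbk, if_true, if_false, Bool.false_eq_true] at h2 ⊢ <;> omega

lemma count_D_map_toS (l : List Bool) : (l.map toS).count DyckStep.D = l.count true := by
  induction l with
  | nil => rfl
  | cons a l ih => cases a <;> simp [count_cons, ih, toS]

lemma count_U_map_toS (l : List Bool) : (l.map toS).count DyckStep.U = l.count false := by
  induction l with
  | nil => rfl
  | cons a l ih => cases a <;> simp [count_cons, ih, toS]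

lemma card_cond (m : ℕ) :
    Fintype.card {b : Fin (2 * m + 1) → Bool // cond (2 * m + 1) b} = catalan m := by
  rw [← DyckWord.card_dyckWord_semilength_eq_catalan m]
  apply Fintype.card_congr
  symm
  apply Equiv.ofBijective (f := fun p : {p : DyckWord // p.semilength = m} =>
    (⟨Fmap m p.1, cond_Fmap m p.1 p.2⟩ : {b : Fin (2 * m + 1) → Bool // cond (2 * m + 1) b}))
  constructor
  · rintro ⟨p, hp⟩ ⟨p', hp'⟩ h
    simp only [Subtype.mk.injEq] at h ⊢
    have h2 : List.ofFn (Fmap m p) = List.ofFn (Fmap m p') := by rw [h]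
    rw [ofFn_Fmap m p hp, ofFn_Fmap m p' hp'] at h2
    have h3 : p.toList.map toB = p'.toList.map toB := by
      exact List.append_cancel_right h2
    have h4 := congrArg (List.map toS) h3
    simp only [List.map_map, Function.comp_def, toS_toB, List.map_id'] at h4
    exact DyckWord.ext h4
  · rintro ⟨b, hc⟩
    -- decompose ofFn b
    set l' : List Bool := List.ofFn (fun i : Fin (2*m) => b i.castSucc) with hl'
    have hsplit : List.ofFn b = l' ++ [b (Fin.last (2*m))] := by
      rw [List.ofFn_succ']
      simp [hl', List.concat_eq_append]
    have hlen' : l'.length = 2*m := by simp [hl']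
    have htake : ∀ k, k ≤ 2*m → (List.ofFn b).take k = l'.take k := by
      intro k hk
      rw [hsplit, List.take_append]
      have : k - l'.length = 0 := by omega
      rw [this]
      simp
    have hl'val : bval l' ≤ 0 := by
      have := nonpos_of_cond hc (2*m) (by omega)
      rwa [htake (2*m) le_rfl, List.take_of_length_le (le_of_eq hlen')] at this
    have hfull : bval (List.ofFn b) = 1 := hc.1
    rw [hsplit, bval_append] at hfull
    have hlast : b (Fin.last (2*m)) = true := by
      by_contra hb
      simp only [Bool.not_eq_true] at hb
      simp [hb] at hfull
      omega
    have hl'0 : bval l' = 0 := by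
      simp [hlast] at hfull
      omega
    -- counts
    have hcounts := counts_add l'
    have hcteq : l'.count true = l'.count false := by
      rw [bval_eq_counts] at hl'0
      omega
    refine ⟨⟨⟨l'.map toS, ?_, ?_⟩, ?_⟩, ?_⟩
    · rw [count_U_map_toS, count_D_map_toS, hcteq]
    · intro i
      rw [← List.map_take, count_U_map_toS, count_D_map_toS]
      have hbv : bval (l'.take i) ≤ 0 := by
        rcases le_or_gt i (2*m) with hi | hi
        · have := nonpos_of_cond hc i (by omega)
          rwa [htake i hi] at this
        · rw [List.take_of_length_le (by omega)]
          exact hl'0.le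
      rw [bval_eq_counts] at hbv
      omega
    · show (l'.map toS).count DyckStep.U = m
      rw [count_U_map_toS]
      omega
    · apply Subtype.ext
      funext i
      show (((l'.map toS).map toB) ++ [true]).getD i true = b i
      have : (l'.map toS).map toB = l' := by
        simp [List.map_map, Function.comp_def]
      rw [this, ← hlast, ← hsplit]
      have hi : (i : ℕ) < (List.ofFn b).length := by rw [List.length_ofFn]; exact i.isLt
      rw [List.getD_eq_getElem?_getD, List.getElem?_eq_getElem hi, Option.getD_some,
        List.getElem_ofFn]

end LawTau1

namespace LawTau1

lemma bval_ofFn_sum {n : ℕ} (b : Fin n → Bool) :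
    bval (List.ofFn b) = ∑ i : Fin n, (if b i then (1:ℤ) else -1) := by
  rw [bval, List.map_ofFn, List.sum_ofFn]
  rfl

open Finset in
lemma card_true_of_cond {m : ℕ} {b : Fin (2*m+1) → Bool} (hc : cond (2*m+1) b) :
    (Finset.univ.filter (fun i => b i = true)).card = m + 1 := by
  have h1 := hc.1
  rw [bval_ofFn_sum] at h1
  rw [Finset.sum_ite, Finset.sum_const, Finset.sum_const, nsmul_eq_mul, nsmul_eq_mul] at h1
  have h2 : (univ.filter (fun x => b x = true)).card
      + (univ.filter (fun x => ¬ b x = true)).card = 2*m+1 := by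
    simpa using Finset.card_filter_add_card_filter_not
      (s := (univ : Finset (Fin (2*m+1)))) (p := fun i => b i = true)
  simp only [mul_one, mul_neg_one] at h1
  omega

lemma parity_no_cond {n : ℕ} (hev : Even n) (b : Fin n → Bool) : ¬ cond n b := by
  intro hc
  have h1 := hc.1
  rw [bval_ofFn_sum, Finset.sum_ite, Finset.sum_const, Finset.sum_const,
    nsmul_eq_mul, nsmul_eq_mul] at h1
  have h2 : (Finset.univ.filter (fun x => b x = true)).card
      + (Finset.univ.filter (fun x => ¬ b x = true)).card = n := by
    simpa using Finset.card_filter_add_card_filter_not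
      (s := (Finset.univ : Finset (Fin n))) (p := fun i => b i = true)
  simp only [mul_one, mul_neg_one] at h1
  obtain ⟨r, hr⟩ := hev
  omega

section Prob
open MeasureTheory ProbabilityTheory

variable {Ω : Type*} [MeasurableSpace Ω] {μ : Measure Ω} [IsProbabilityMeasure μ]
  {p : ℝ} {X : ℕ → Ω → ℤ}

/-- the prescribed value of step i -/
def cstep (n : ℕ) (b : Fin n → Bool) (i : ℕ) : ℤ :=
  if h : i < n then (if b ⟨i, h⟩ then 1 else -1) else 1

def Ebset (X : ℕ → Ω → ℤ) (n : ℕ) (b : Fin n → Bool) : Set Ω :=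
  ⋂ i ∈ Finset.range n, X i ⁻¹' {cstep n b i}

lemma mem_Ebset {n : ℕ} {b : Fin n → Bool} {ω : Ω} :
    ω ∈ Ebset X n b ↔ ∀ i : Fin n, X i ω = (if b i then 1 else -1) := by
  simp only [Ebset, Set.mem_iInter, Set.mem_preimage, Set.mem_singleton_iff, Finset.mem_range]
  constructor
  · intro h i
    have := h i i.isLt
    rwa [cstep, dif_pos i.isLt, Fin.eta] at this
  · intro h i hi
    rw [cstep, dif_pos hi]
    exact h ⟨i, hi⟩

lemma meas_Ebset (hindep : iIndepFun X μ)
    (hX1 : ∀ i, μ {ω | X i ω = 1} = ENNReal.ofReal p)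
    (hX2 : ∀ i, μ {ω | X i ω = -1} = ENNReal.ofReal (1 - p))
    (n : ℕ) (b : Fin n → Bool) :
    μ (Ebset X n b)
      = ∏ i : Fin n, (if b i then ENNReal.ofReal p else ENNReal.ofReal (1 - p)) := by
  rw [Ebset, hindep.meas_biInter (fun i _ => ⟨{cstep n b i}, measurableSet_singleton _, rfl⟩)]
  rw [← Fin.prod_univ_eq_prod_range (fun i => μ (X i ⁻¹' {cstep n b i})) n]
  apply Finset.prod_congr rfl
  intro i _
  rw [cstep, dif_pos i.isLt, Fin.eta]
  by_cases hb : b i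
  · rw [if_pos hb, if_pos hb, ← hX1 i]; rfl
  · rw [if_neg hb, if_neg hb, ← hX2 i]; rfl

lemma bridge {S : ℕ → Ω → ℤ} (hS : ∀ n ω, S n ω = ∑ i ∈ Finset.range n, X i ω)
    {n : ℕ} {b : Fin n → Bool} {ω : Ω} (hω : ω ∈ Ebset X n b) :
    ∀ k, k ≤ n → S k ω = bval ((List.ofFn b).take k) := by
  intro k
  induction k with
  | zero => intro _; simp [hS]
  | succ k ih =>
    intro hk
    have hk' : k < n := hk
    have hkl : k < (List.ofFn b).length := by rw [List.length_ofFn]; omega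
    rw [bval_take_succ _ k hkl, ← ih (by omega), hS (k+1), Finset.sum_range_succ, ← hS k]
    have hget : (List.ofFn b)[k] = b ⟨k, hk'⟩ := by
      rw [List.getElem_ofFn]
    rw [hget, mem_Ebset.mp hω ⟨k, hk'⟩]

end Prob
end LawTau1


open MeasureTheory ProbabilityTheory Finset

noncomputable def aCoef (i : ℕ) : ℝ := (1 / ((i : ℝ) + 2)) * (i.choose (i / 2) : ℝ)

theorem law_tau1 {Ω : Type*} [MeasurableSpace Ω] (μ : Measure Ω)
    [IsProbabilityMeasure μ]
    (p : ℝ) (hp0 : 0 < p) (hp1 : p < 1)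
    (X : ℕ → Ω → ℤ) (hmeas : ∀ i, Measurable (X i))
    (hindep : iIndepFun X μ)
    (hX1 : ∀ i, μ {ω | X i ω = 1} = ENNReal.ofReal p)
    (hX2 : ∀ i, μ {ω | X i ω = -1} = ENNReal.ofReal (1 - p))
    (S : ℕ → Ω → ℤ) (hS : ∀ n ω, S n ω = ∑ i ∈ Finset.range n, X i ω)
    (n : ℕ) (hn : 1 ≤ n)
    :
    (Odd n →
      (μ {ω | S n ω = 1 ∧ ∀ m, 1 ≤ m → m < n → S m ω ≠ 1}).toReal
        = 2 * aCoef (n - 1) * p ^ ((n + 1) / 2) * (1 - p) ^ ((n - 1) / 2)) ∧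
    (Even n →
      (μ {ω | S n ω = 1 ∧ ∀ m, 1 ≤ m → m < n → S m ω ≠ 1}).toReal = 0) := by
  classical
  open LawTau1 in
  set G : Set Ω := {ω | ∀ i, i < n → X i ω = 1 ∨ X i ω = -1} with hGdef
  have hmeas1 : ∀ i, MeasurableSet {ω | X i ω = 1} := fun i =>
    hmeas i (measurableSet_singleton 1)
  have hmeas2 : ∀ i, MeasurableSet {ω | X i ω = -1} := fun i =>
    hmeas i (measurableSet_singleton (-1))
  have hGc : μ Gᶜ = 0 := by
    have hsub : Gᶜ ⊆ ⋃ i ∈ Finset.range n, ({ω | X i ω = 1} ∪ {ω | X i ω = -1})ᶜ := by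
      intro ω hω
      simp only [hGdef, Set.mem_compl_iff, Set.mem_setOf_eq, not_forall] at hω
      obtain ⟨i, hi, hno⟩ := hω
      refine Set.mem_biUnion (Finset.mem_range.mpr hi) ?_
      simp only [Set.mem_compl_iff, Set.mem_union, Set.mem_setOf_eq]
      tauto
    refine measure_mono_null hsub ?_
    refine (measure_biUnion_null_iff (Finset.range n).countable_toSet).mpr ?_
    intro i _
    have hdisj : Disjoint {ω | X i ω = 1} {ω | X i ω = -1} := by
      rw [Set.disjoint_left]
      intro ω h1 h2
      simp only [Set.mem_setOf_eq] at h1 h2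
      omega
    have hsum : μ ({ω | X i ω = 1} ∪ {ω | X i ω = -1}) = 1 := by
      rw [measure_union hdisj (hmeas2 i), hX1 i, hX2 i,
        ← ENNReal.ofReal_add hp0.le (by linarith)]
      norm_num
    rw [measure_compl ((hmeas1 i).union (hmeas2 i)) (measure_ne_top μ _), hsum, measure_univ,
      tsub_self]
  have hAG : {ω | S n ω = 1 ∧ ∀ m, 1 ≤ m → m < n → S m ω ≠ 1} ∩ G
      = ⋃ b ∈ Finset.univ.filter (LawTau1.cond n), LawTau1.Ebset X n b := by
    ext ω
    simp only [Set.mem_inter_iff, Set.mem_setOf_eq, Set.mem_iUnion, Finset.mem_filter,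
      Finset.mem_univ, true_and, exists_prop, hGdef]
    constructor
    · rintro ⟨⟨hSn, hSm⟩, hG'⟩
      have hmem : ω ∈ LawTau1.Ebset X n (fun i => decide (X (i:ℕ) ω = 1)) := by
        rw [LawTau1.mem_Ebset]
        intro i
        rcases hG' i i.isLt with h | h
        · simp [h]
        · simp only [h, decide_eq_true_eq]
          norm_num
      refine ⟨fun i => decide (X (i:ℕ) ω = 1), ⟨?_, ?_⟩, hmem⟩
      · have hb := LawTau1.bridge hS hmem n le_rfl
        rw [List.take_of_length_le (le_of_eq List.length_ofFn)] at hb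
        rw [← hb, hSn]
      · intro k hk1 hkn h
        exact hSm k hk1 hkn (by rw [LawTau1.bridge hS hmem k hkn.le]; exact h)
    · rintro ⟨b, hb, hmem⟩
      have hOm : ∀ i, i < n → X i ω = 1 ∨ X i ω = -1 := by
        intro i hi
        have := LawTau1.mem_Ebset.mp hmem ⟨i, hi⟩
        split at this
        · exact Or.inl this
        · exact Or.inr this
      refine ⟨⟨?_, ?_⟩, hOm⟩
      · rw [LawTau1.bridge hS hmem n le_rfl,
          List.take_of_length_le (le_of_eq List.length_ofFn)]
        exact hb.1
      · intro k hk1 hkn h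
        rw [LawTau1.bridge hS hmem k hkn.le] at h
        exact hb.2 k hk1 hkn h
  have hdisj : (↑(Finset.univ.filter (LawTau1.cond n)) : Set (Fin n → Bool)).PairwiseDisjoint
      (LawTau1.Ebset X n) := by
    intro b _ b' _ hne
    rw [Function.onFun, Set.disjoint_left]
    intro ω h1 h2
    apply hne
    funext i
    have e1 := LawTau1.mem_Ebset.mp h1 i
    have e2 := LawTau1.mem_Ebset.mp h2 i
    have e3 := e1.symm.trans e2
    by_cases hbi : b i <;> by_cases hbi' : b' i <;>
      simp only [hbi, hbi', if_true, if_false, Bool.false_eq_true] at e3 ⊢ <;> omega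
  have hEmeas : ∀ b : Fin n → Bool, MeasurableSet (LawTau1.Ebset X n b) := fun b =>
    Set.Finite.measurableSet_biInter (Finset.range n).finite_toSet
      (fun i _ => hmeas i (measurableSet_singleton _))
  have hmain : μ {ω | S n ω = 1 ∧ ∀ m, 1 ≤ m → m < n → S m ω ≠ 1}
      = ∑ b ∈ Finset.univ.filter (LawTau1.cond n), μ (LawTau1.Ebset X n b) := by
    rw [← measure_inter_conull hGc, hAG, measure_biUnion_finset hdisj (fun b _ => hEmeas b)]
  constructor
  · -- odd case
    rintro ⟨m, hm⟩
    have hnm : n = 2 * m + 1 := by omega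
    subst hnm
    have hterm : ∀ b ∈ Finset.univ.filter (LawTau1.cond (2*m+1)),
        μ (LawTau1.Ebset X (2*m+1) b)
          = ENNReal.ofReal p ^ (m+1) * ENNReal.ofReal (1-p) ^ m := by
      intro b hb
      rw [Finset.mem_filter] at hb
      rw [LawTau1.meas_Ebset hindep hX1 hX2, Finset.prod_ite, Finset.prod_const,
        Finset.prod_const, LawTau1.card_true_of_cond hb.2]
      congr 2
      have h2 : (Finset.univ.filter (fun x => b x = true)).card
          + (Finset.univ.filter (fun x => ¬ b x = true)).card = 2*m+1 := by
        simpa using Finset.card_filter_add_card_filter_not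
          (s := (Finset.univ : Finset (Fin (2*m+1)))) (p := fun i => b i = true)
      have h3 := LawTau1.card_true_of_cond hb.2
      omega
    rw [hmain, Finset.sum_congr rfl hterm, Finset.sum_const]
    have hcard : (Finset.univ.filter (LawTau1.cond (2*m+1))).card = catalan m := by
      rw [← LawTau1.card_cond m, Fintype.card_subtype]
    rw [hcard, nsmul_eq_mul]
    have hq0 : (0:ℝ) ≤ 1 - p := by linarith
    rw [← ENNReal.ofReal_pow hp0.le, ← ENNReal.ofReal_pow hq0, ← ENNReal.ofReal_mul (by positivity)]
    rw [ENNReal.toReal_mul, ENNReal.toReal_natCast, ENNReal.toReal_ofReal (by positivity)]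
    have hcat : ((catalan m : ℝ)) = 2 * aCoef (2*m+1-1) := by
      have h1 := congrArg (fun k : ℕ => (k : ℝ)) (succ_mul_catalan_eq_centralBinom m)
      simp only [Nat.cast_mul, Nat.cast_add, Nat.cast_one] at h1
      have h2 : Nat.centralBinom m = (2*m).choose m := rfl
      rw [h2] at h1
      have h3 : (2*m+1-1) = 2*m := by omega
      rw [h3]
      have h4 : (2*m)/2 = m := by omega
      rw [aCoef, h4]
      have h5 : ((m:ℝ) + 1) ≠ 0 := by positivity
      field_simp
      push_cast at h1 ⊢
      linarith
    have he1 : (2*m+1+1)/2 = m + 1 := by omega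
    have he2 : (2*m+1-1)/2 = m := by omega
    rw [he1, he2, hcat]
    ring
  · -- even case
    intro hev
    rw [hmain]
    have : Finset.univ.filter (LawTau1.cond n) = ∅ := by
      apply Finset.filter_false_of_mem
      intro b _
      exact LawTau1.parity_no_cond hev b
    rw [this, Finset.sum_empty, ENNReal.toReal_zero]
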